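/- For positive semidefinite A, B ∈ M_n(ℂ) and any real q ≥ 1/n, det(A+B)^q ≥ det(A)^q + det(B)^q. -/

import Mathlib

open ComplexOrder Matrix Finset

private lemma gm_superadd {n : ℕ} (hn : 0 < n) (l : Fin n → ℝ) (hl : ∀ i, 0 ≤ l i) :
    1 + (∏ i, l i) ^ ((n : ℝ)⁻¹) ≤ (∏ i, (1 + l i)) ^ ((n : ℝ)⁻¹) := by
  have hn' : (0 : ℝ) < n := Nat.cast_pos.mpr hn
  have hpos : ∀ i, (0 : ℝ) < 1 + l i := fun i => by linarith [hl i]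
  have hwnn : ∀ i ∈ (Finset.univ : Finset (Fin n)), (0:ℝ) ≤ (n : ℝ)⁻¹ := fun i _ => by positivity
  have hwsum : ∑ _i : Fin n, (n : ℝ)⁻¹ = 1 := by
    rw [Finset.sum_const, Finset.card_univ, Fintype.card_fin, nsmul_eq_mul,
      mul_inv_cancel₀ hn'.ne']
  have h1 := Real.geom_mean_le_arith_mean_weighted Finset.univ (fun _ => (n : ℝ)⁻¹)
    (fun i => 1 / (1 + l i)) hwnn hwsum (fun i _ => (one_div_nonneg).mpr (hpos i).le)
  have h2 := Real.geom_mean_le_arith_mean_weighted Finset.univ (fun _ => (n : ℝ)⁻¹)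
    (fun i => l i / (1 + l i)) hwnn hwsum (fun i _ => div_nonneg (hl i) (hpos i).le)
  have hsum : (∑ i : Fin n, (n : ℝ)⁻¹ * (1 / (1 + l i)))
      + ∑ i : Fin n, (n : ℝ)⁻¹ * (l i / (1 + l i)) = 1 := by
    rw [← Finset.sum_add_distrib]
    have hterm : ∀ i ∈ (Finset.univ : Finset (Fin n)),
        (n : ℝ)⁻¹ * (1 / (1 + l i)) + (n : ℝ)⁻¹ * (l i / (1 + l i)) = (n : ℝ)⁻¹ :=
      fun i _ => by rw [← mul_add, ← add_div, div_self (hpos i).ne', mul_one]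
    rw [Finset.sum_congr rfl hterm, hwsum]
  have hQpos : (0:ℝ) < ∏ i, (1 + l i) := Finset.prod_pos fun i _ => hpos i
  have hkey : (∏ i, (1 / (1 + l i)) ^ ((n : ℝ)⁻¹)) + ∏ i, (l i / (1 + l i)) ^ ((n : ℝ)⁻¹) ≤ 1 :=
    le_trans (add_le_add h1 h2) (le_of_eq hsum)
  have hQnn : (0:ℝ) ≤ (∏ i, (1 + l i)) ^ ((n : ℝ)⁻¹) := Real.rpow_nonneg hQpos.le _
  have hQ : (∏ i, (1 + l i) ^ ((n : ℝ)⁻¹)) = (∏ i, (1 + l i)) ^ ((n : ℝ)⁻¹) :=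
    Real.finset_prod_rpow _ _ (fun i _ => (hpos i).le) _
  have hmul := mul_le_mul_of_nonneg_right hkey hQnn
  rw [one_mul] at hmul
  have e1 : (∏ i, (1 / (1 + l i)) ^ ((n : ℝ)⁻¹)) * (∏ i, (1 + l i)) ^ ((n : ℝ)⁻¹) = 1 := by
    rw [← hQ, ← Finset.prod_mul_distrib]
    refine Finset.prod_eq_one fun i _ => ?_
    rw [← Real.mul_rpow ((one_div_nonneg).mpr (hpos i).le) (hpos i).le, one_div,
      inv_mul_cancel₀ (hpos i).ne', Real.one_rpow]
  have e2 : (∏ i, (l i / (1 + l i)) ^ ((n : ℝ)⁻¹)) * (∏ i, (1 + l i)) ^ ((n : ℝ)⁻¹)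
      = (∏ i, l i) ^ ((n : ℝ)⁻¹) := by
    rw [← hQ, ← Finset.prod_mul_distrib,
      ← Real.finset_prod_rpow _ _ (fun i _ => hl i) ((n : ℝ)⁻¹)]
    refine Finset.prod_congr rfl fun i _ => ?_
    rw [← Real.mul_rpow (div_nonneg (hl i) (hpos i).le) (hpos i).le,
      div_mul_cancel₀ _ (hpos i).ne']
  rw [add_mul, e1, e2] at hmul
  exact hmul

private lemma psd_det_real {n : ℕ} (M : Matrix (Fin n) (Fin n) ℂ) (hM : M.PosSemidef) :
    M.det = (M.det.re : ℂ) ∧ 0 ≤ M.det.re := by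
  have h : M.det = ((∏ i, hM.1.eigenvalues i : ℝ) : ℂ) := by
    rw [hM.1.det_eq_prod_eigenvalues]; push_cast; rfl
  constructor
  · rw [h, Complex.ofReal_re]
  · rw [h, Complex.ofReal_re]
    exact Finset.prod_nonneg fun i _ => hM.eigenvalues_nonneg i

private lemma psd_posdef_of_det_ne_zero {n : ℕ} {M : Matrix (Fin n) (Fin n) ℂ}
    (hM : M.PosSemidef) (hd : M.det ≠ 0) : M.PosDef := by
  refine posDef_iff_dotProduct_mulVec.mpr ⟨hM.1, fun x hx => ?_⟩
  refine lt_of_le_of_ne (hM.dotProduct_mulVec_nonneg x) ?_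
  have hMx : M *ᵥ x ≠ 0 := by
    intro h
    exact hx (Matrix.mulVec_injective_iff_isUnit.mpr ((Matrix.isUnit_iff_isUnit_det M).mpr
      hd.isUnit) (by simpa using h))
  intro h
  exact hMx ((hM.dotProduct_mulVec_zero_iff x).mp h.symm)

open scoped MatrixOrder in
private lemma minkowski_posdef {n : ℕ} (hn : 0 < n) (A B : Matrix (Fin n) (Fin n) ℂ)
    (hA : A.PosDef) (hB : B.PosSemidef) :
    A.det.re ^ ((n : ℝ)⁻¹) + B.det.re ^ ((n : ℝ)⁻¹) ≤ (A + B).det.re ^ ((n : ℝ)⁻¹) := by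
  have hAs := hA.posSemidef
  set S := CFC.sqrt A with hSdef
  have hS : S.PosSemidef := (CFC.sqrt_nonneg A).posSemidef
  have hSS : S * S = A := CFC.sqrt_mul_sqrt_self A hAs.nonneg
  have hdetSS : S.det * S.det = A.det := by rw [← Matrix.det_mul, hSS]
  have hdetS : S.det ≠ 0 := by
    intro h
    exact hA.det_pos.ne' (by rw [← hdetSS, h, zero_mul])
  have hSinv : S * S⁻¹ = 1 := Matrix.mul_nonsing_inv S hdetS.isUnit
  have hSinv' : S⁻¹ * S = 1 := Matrix.nonsing_inv_mul S hdetS.isUnit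
  set C := S⁻¹ * B * S⁻¹ with hCdef
  have hSinvH : (S⁻¹)ᴴ = S⁻¹ := by
    rw [Matrix.conjTranspose_nonsing_inv, hS.1]
  have hC : C.PosSemidef := by
    have := hB.conjTranspose_mul_mul_same S⁻¹
    rwa [hSinvH] at this
  have hBS : S * C * S = B := by
    rw [hCdef]
    calc S * (S⁻¹ * B * S⁻¹) * S = (S * S⁻¹) * B * (S⁻¹ * S) := by
          simp only [Matrix.mul_assoc]
      _ = B := by rw [hSinv, hSinv', Matrix.one_mul, Matrix.mul_one]
  have hABeq : A + B = S * (1 + C) * S := by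
    rw [Matrix.mul_add, Matrix.mul_one, Matrix.add_mul, hSS, hBS]
  have hdetAB : (A + B).det = A.det * (1 + C).det := by
    rw [hABeq, Matrix.det_mul, Matrix.det_mul, ← hdetSS]; ring
  have hdetB : B.det = A.det * C.det := by
    rw [← hBS, Matrix.det_mul, Matrix.det_mul, ← hdetSS]; ring
  set l := hC.1.eigenvalues with hldef
  have hl : ∀ i, 0 ≤ l i := fun i => hC.eigenvalues_nonneg i
  have hdetC : C.det = ((∏ i, l i : ℝ) : ℂ) := by
    rw [hC.1.det_eq_prod_eigenvalues]; push_cast; rfl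
  have hdet1C : (1 + C).det = ((∏ i, (1 + l i) : ℝ) : ℂ) := by
    set U : Matrix (Fin n) (Fin n) ℂ := (hC.1.eigenvectorUnitary : Matrix (Fin n) (Fin n) ℂ) with hUdef
    have hU : U * star U = 1 :=
      (Matrix.mem_unitaryGroup_iff).mp hC.1.eigenvectorUnitary.2
    have hspec : C = U * Matrix.diagonal (RCLike.ofReal ∘ l) * star U :=
      hC.1.spectral_theorem
    have h1C : 1 + C = U * (1 + Matrix.diagonal (RCLike.ofReal ∘ l)) * star U := by
      rw [Matrix.mul_add, Matrix.mul_one, Matrix.add_mul, hU, ← hspec]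
    rw [h1C, Matrix.det_mul_right_comm, Matrix.det_mul, hU, Matrix.det_one, one_mul]
    rw [show (1 : Matrix (Fin n) (Fin n) ℂ) + Matrix.diagonal (RCLike.ofReal ∘ l)
        = Matrix.diagonal (fun i => 1 + (l i : ℂ)) by
      rw [← Matrix.diagonal_one, Matrix.diagonal_add]; rfl]
    rw [Matrix.det_diagonal]
    push_cast
    rfl
  obtain ⟨hAre, _⟩ := psd_det_real A hAs
  have ha : 0 < A.det.re := by
    have := hA.det_pos
    rw [hAre] at this
    exact_mod_cast this
  set a := A.det.re with hadef
  have hBre : B.det.re = a * ∏ i, l i := by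
    rw [hdetB, hAre, hdetC, ← Complex.ofReal_mul, Complex.ofReal_re]
  have hABre : (A + B).det.re = a * ∏ i, (1 + l i) := by
    rw [hdetAB, hAre, hdet1C, ← Complex.ofReal_mul, Complex.ofReal_re]
  rw [hBre, hABre]
  have hprodl : 0 ≤ ∏ i, l i := Finset.prod_nonneg fun i _ => hl i
  have hprod1l : 0 ≤ ∏ i, (1 + l i) :=
    Finset.prod_nonneg fun i _ => by linarith [hl i]
  rw [Real.mul_rpow ha.le hprodl, Real.mul_rpow ha.le hprod1l]
  calc a ^ ((n : ℝ)⁻¹) + a ^ ((n : ℝ)⁻¹) * (∏ i, l i) ^ ((n : ℝ)⁻¹)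
      = a ^ ((n : ℝ)⁻¹) * (1 + (∏ i, l i) ^ ((n : ℝ)⁻¹)) := by ring
    _ ≤ a ^ ((n : ℝ)⁻¹) * (∏ i, (1 + l i)) ^ ((n : ℝ)⁻¹) :=
        mul_le_mul_of_nonneg_left (gm_superadd hn l hl) (Real.rpow_nonneg ha.le _)

private lemma minkowski_psd {n : ℕ} (hn : 0 < n) (A B : Matrix (Fin n) (Fin n) ℂ)
    (hA : A.PosSemidef) (hB : B.PosSemidef) :
    A.det.re ^ ((n : ℝ)⁻¹) + B.det.re ^ ((n : ℝ)⁻¹) ≤ (A + B).det.re ^ ((n : ℝ)⁻¹) := by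
  by_cases hA' : A.PosDef
  · exact minkowski_posdef hn A B hA' hB
  by_cases hB' : B.PosDef
  · rw [add_comm ((A.det.re) ^ ((n : ℝ)⁻¹)), add_comm A B]
    exact minkowski_posdef hn B A hB' hA
  have hdA : A.det.re = 0 := by
    by_contra h
    exact hA' (psd_posdef_of_det_ne_zero hA (by
      intro h0; exact h (by rw [h0]; rfl)))
  have hdB : B.det.re = 0 := by
    by_contra h
    exact hB' (psd_posdef_of_det_ne_zero hB (by
      intro h0; exact h (by rw [h0]; rfl)))
  have hninv : ((n : ℝ)⁻¹) ≠ 0 := by positivity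
  rw [hdA, hdB, Real.zero_rpow hninv, add_zero]
  exact Real.rpow_nonneg (psd_det_real _ (hA.add hB)).2 _

theorem stmt_19 {n : ℕ} (hn : 0 < n) (A B : Matrix (Fin n) (Fin n) ℂ)
    (hA : A.PosSemidef) (hB : B.PosSemidef) (q : ℝ) (hq : 1 / (n : ℝ) ≤ q) :
    A.det.re ^ q + B.det.re ^ q ≤ (A + B).det.re ^ q := by
  have hn' : (0 : ℝ) < n := Nat.cast_pos.mpr hn
  have hmink := minkowski_psd hn A B hA hB
  set w : ℝ := (n : ℝ)⁻¹ with hwdef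
  have hwpos : 0 < w := by positivity
  set p : ℝ := q * n with hpdef
  have hp1 : 1 ≤ p := by
    rw [hpdef]
    calc (1:ℝ) = (1 / n) * n := by field_simp
      _ ≤ q * n := by apply mul_le_mul_of_nonneg_right hq hn'.le
  have hwp : w * p = q := by rw [hwdef, hpdef]; field_simp
  have hAnn := (psd_det_real A hA).2
  have hBnn := (psd_det_real B hB).2
  have hABnn := (psd_det_real _ (hA.add hB)).2
  set x := A.det.re ^ w with hx
  set y := B.det.re ^ w with hy
  set z := (A + B).det.re ^ w with hz
  have hxnn : 0 ≤ x := Real.rpow_nonneg hAnn _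
  have hynn : 0 ≤ y := Real.rpow_nonneg hBnn _
  have hxp : x ^ p = A.det.re ^ q := by
    rw [hx, ← Real.rpow_mul hAnn, hwp]
  have hyp : y ^ p = B.det.re ^ q := by
    rw [hy, ← Real.rpow_mul hBnn, hwp]
  have hzp : z ^ p = (A + B).det.re ^ q := by
    rw [hz, ← Real.rpow_mul hABnn, hwp]
  have hadd : x ^ p + y ^ p ≤ (x + y) ^ p := by
    have h := NNReal.add_rpow_le_rpow_add (⟨x, hxnn⟩ : NNReal) ⟨y, hynn⟩ hp1
    have h2 := (NNReal.coe_le_coe).mpr h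
    push_cast [NNReal.coe_rpow] at h2
    exact h2
  calc A.det.re ^ q + B.det.re ^ q = x ^ p + y ^ p := by rw [hxp, hyp]
    _ ≤ (x + y) ^ p := hadd
    _ ≤ z ^ p := Real.rpow_le_rpow (add_nonneg hxnn hynn) hmink (by linarith)
    _ = (A + B).det.re ^ q := hzp
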